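/- Let u and v be non-adjacent vertices of the Farey graph. If c₁ and c₂ are two distinct vertices of the Farey graph each adjacent to both u and v, then c₁ and c₂ are adjacent to each other. Consequently, if u and v are the outer points of a quadrilateral triple (u, c₁, v), then there is exactly one other quadrilateral triple (u, c₂, v) with outer points u and v, and the two central points c₁ and c₂ are adjacent. -/

import Mathlib

/-- A Farey pair: a pair of coprime integers. -/
abbrev FareyPair : Type := {v : ℤ × ℤ // IsCoprime v.1 v.2}

/-- Identify a coprime pair of integers with its negative. -/
instance fareySetoid : Setoid FareyPair where
  r a b := a.1 = b.1 ∨ a.1 = -b.1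
  iseqv := by
    refine ⟨fun a => Or.inl rfl, ?_, ?_⟩
    · rintro a b (h | h)
      · exact Or.inl h.symm
      · exact Or.inr (by rw [h, neg_neg])
    · rintro a b c (h1 | h1) (h2 | h2)
      · exact Or.inl (h1.trans h2)
      · exact Or.inr (h1.trans h2)
      · exact Or.inr (by rw [h1, h2])
      · exact Or.inl (by rw [h1, h2, neg_neg])

/-- Vertices of the Farey graph: coprime integer pairs up to sign. -/
abbrev FareyVertex : Type := Quotient fareySetoid

/-- The Farey vertex `[p, q]` determined by a coprime pair `(p, q)`. -/
def fareyMk (p q : ℤ) (h : IsCoprime p q) : FareyVertex :=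
  Quotient.mk fareySetoid ⟨(p, q), h⟩

/-- The absolute value of the determinant, descended to Farey vertices. -/
def fareyDetAbs : FareyVertex → FareyVertex → ℤ :=
  Quotient.lift₂ (fun a b : FareyPair => |a.1.1 * b.1.2 - a.1.2 * b.1.1|)
    (by
      rintro a b a' b' (h1 | h1) (h2 | h2)
      · simp only [h1, h2]
      · simp only [h1, h2, Prod.fst_neg, Prod.snd_neg]
        apply abs_eq_abs.mpr
        right; ring
      · simp only [h1, h2, Prod.fst_neg, Prod.snd_neg]
        apply abs_eq_abs.mpr
        right; ring
      · simp only [h1, h2, Prod.fst_neg, Prod.snd_neg]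
        apply abs_eq_abs.mpr
        left; ring)

lemma fareyDetAbs_comm (u v : FareyVertex) : fareyDetAbs u v = fareyDetAbs v u := by
  refine Quotient.inductionOn₂ u v fun a b => ?_
  show |a.1.1 * b.1.2 - a.1.2 * b.1.1| = |b.1.1 * a.1.2 - b.1.2 * a.1.1|
  rw [abs_sub_comm]
  exact congrArg abs (by ring)

/-- The Farey graph: coprime integer pairs up to sign, adjacent when the
determinant is `±1`. -/
def FareyGraph : SimpleGraph FareyVertex where
  Adj u v := fareyDetAbs u v = 1
  symm := by
    constructor
    intro u v h
    show fareyDetAbs v u = 1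
    rwa [fareyDetAbs_comm]
  loopless := by
    constructor
    intro u
    refine Quotient.inductionOn u fun a => ?_
    show ¬(|a.1.1 * a.1.2 - a.1.2 * a.1.1| = 1)
    rw [show a.1.1 * a.1.2 - a.1.2 * a.1.1 = 0 from by ring]
    simp

/-- A pair of integers forming a unimodular matrix with another pair is coprime. -/
lemma coprime_of_det (a b c d : ℤ) (h : |a * d - b * c| = 1) : IsCoprime a b := by
  rcases (abs_eq (by norm_num : (0:ℤ) ≤ 1)).mp h with h' | h'
  · exact ⟨d, -c, by linear_combination h'⟩
  · exact ⟨-d, c, by linear_combination -h'⟩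



/-- Two coprime pairs with zero determinant are equal up to sign. -/
lemma farey_parallel (a b c d : ℤ) (hab : IsCoprime a b) (hcd : IsCoprime c d)
    (h : a * d - b * c = 0) : (c = a ∧ d = b) ∨ (c = -a ∧ d = -b) := by
  obtain ⟨x, y, hxy⟩ := hab
  obtain ⟨w, z, hwz⟩ := hcd
  set t := x * c + y * d with ht
  have hc : c = t * a := by rw [ht]; linear_combination (-y) * h - c * hxy
  have hd : d = t * b := by rw [ht]; linear_combination x * h - d * hxy
  have hunit : t * (w * a + z * b) = 1 := by linear_combination hwz - w * hc - z * hd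
  have hu : IsUnit t := ⟨⟨t, w * a + z * b, hunit, by rw [mul_comm]; exact hunit⟩, rfl⟩
  rcases Int.isUnit_iff.mp hu with h1 | h1 <;> rw [h1] at hc hd
  · left; exact ⟨by linear_combination hc, by linear_combination hd⟩
  · right; exact ⟨by linear_combination hc, by linear_combination hd⟩

lemma farey_prod_neg (X Y : ℤ) (hX : |X| = 1) (hY : |Y| = 1) (h : |X - Y| = 2) :
    X * Y = -1 := by
  rcases (abs_eq (by norm_num : (0:ℤ) ≤ 1)).mp hX with h1 | h1 <;>
    rcases (abs_eq (by norm_num : (0:ℤ) ≤ 1)).mp hY with h2 | h2 <;>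
    subst h1 <;> subst h2 <;> revert h <;> norm_num

lemma farey_key (a b c d p q r s x y : ℤ)
    (h1 : |a*q - b*p| = 1) (h2 : |c*q - d*p| = 1)
    (h3 : |a*s - b*r| = 1) (h4 : |c*s - d*r| = 1)
    (h5 : |a*y - b*x| = 1) (h6 : |c*y - d*x| = 1)
    (hE1 : |a*d - b*c| ≠ 1) (hE0 : a*d - b*c ≠ 0) (hK0 : p*s - q*r ≠ 0) :
    |p*s - q*r| = 1 ∧ (p*y - q*x = 0 ∨ r*y - s*x = 0) := by
  have P1 : (a*d-b*c) * (p*s-q*r) = (a*q-b*p)*(c*s-d*r) - (a*s-b*r)*(c*q-d*p) := by ring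
  have P2 : (a*d-b*c) * (p*y-q*x) = (a*q-b*p)*(c*y-d*x) - (a*y-b*x)*(c*q-d*p) := by ring
  have P3 : (a*d-b*c) * (r*y-s*x) = (a*s-b*r)*(c*y-d*x) - (a*y-b*x)*(c*s-d*r) := by ring
  have hb : ∀ X Y Z W : ℤ, |X| = 1 → |Y| = 1 → |Z| = 1 → |W| = 1 →
      |X*Y - Z*W| ≤ 2 := by
    intro X Y Z W hX hY hZ hW
    calc |X*Y - Z*W| ≤ |X*Y| + |Z*W| := abs_sub _ _
    _ = 2 := by rw [abs_mul, abs_mul, hX, hY, hZ, hW]; norm_num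
  have hEge : (2:ℤ) ≤ |a*d - b*c| := by
    have h0 : (1:ℤ) ≤ |a*d - b*c| := Int.one_le_abs hE0
    have := lt_of_le_of_ne h0 (Ne.symm hE1)
    exact this
  have hEK : |a*d-b*c| * |p*s-q*r| ≤ 2 := by
    rw [← abs_mul, P1]; exact hb _ _ _ _ h1 h4 h3 h2
  have hKge : (1:ℤ) ≤ |p*s-q*r| := Int.one_le_abs hK0
  have hK1 : |p*s-q*r| = 1 := by nlinarith [abs_nonneg (a*d-b*c), abs_nonneg (p*s-q*r)]
  have hE2 : |a*d-b*c| = 2 := by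
    rw [hK1, mul_one] at hEK; linarith
  refine ⟨hK1, ?_⟩
  by_contra hcon
  push_neg at hcon
  obtain ⟨hK1ne, hK2ne⟩ := hcon
  have hEK1 : |a*d-b*c| * |p*y-q*x| ≤ 2 := by
    rw [← abs_mul, P2]; exact hb _ _ _ _ h1 h6 h5 h2
  have hEK2 : |a*d-b*c| * |r*y-s*x| ≤ 2 := by
    rw [← abs_mul, P3]; exact hb _ _ _ _ h3 h6 h5 h4
  have hK1v : |p*y-q*x| = 1 := by
    have := Int.one_le_abs hK1ne
    nlinarith [abs_nonneg (p*y-q*x)]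
  have hK2v : |r*y-s*x| = 1 := by
    have := Int.one_le_abs hK2ne
    nlinarith [abs_nonneg (r*y-s*x)]
  have ab1 : ∀ X Y : ℤ, |X| = 1 → |Y| = 1 → |X * Y| = 1 := by
    intro X Y hX hY; rw [abs_mul, hX, hY]; norm_num
  have m1 : (a*q-b*p)*(c*s-d*r) * ((a*s-b*r)*(c*q-d*p)) = -1 :=
    farey_prod_neg _ _ (ab1 _ _ h1 h4) (ab1 _ _ h3 h2)
      (by rw [← P1, abs_mul, hE2, hK1]; norm_num)
  have m2 : (a*q-b*p)*(c*y-d*x) * ((a*y-b*x)*(c*q-d*p)) = -1 :=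
    farey_prod_neg _ _ (ab1 _ _ h1 h6) (ab1 _ _ h5 h2)
      (by rw [← P2, abs_mul, hE2, hK1v]; norm_num)
  have m3 : (a*s-b*r)*(c*y-d*x) * ((a*y-b*x)*(c*s-d*r)) = -1 :=
    farey_prod_neg _ _ (ab1 _ _ h3 h6) (ab1 _ _ h5 h4)
      (by rw [← P3, abs_mul, hE2, hK2v]; norm_num)
  have hsq : ((a*q-b*p)*(a*s-b*r)*(a*y-b*x)*(c*q-d*p)*(c*s-d*r)*(c*y-d*x))^2 = -1 := by
    have e : ((a*q-b*p)*(a*s-b*r)*(a*y-b*x)*(c*q-d*p)*(c*s-d*r)*(c*y-d*x))^2 =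
        ((a*q-b*p)*(c*s-d*r) * ((a*s-b*r)*(c*q-d*p))) *
        ((a*q-b*p)*(c*y-d*x) * ((a*y-b*x)*(c*q-d*p))) *
        ((a*s-b*r)*(c*y-d*x) * ((a*y-b*x)*(c*s-d*r))) := by ring
    rw [e, m1, m2, m3]; norm_num
  have := sq_nonneg ((a*q-b*p)*(a*s-b*r)*(a*y-b*x)*(c*q-d*p)*(c*s-d*r)*(c*y-d*x))
  rw [hsq] at this
  norm_num at this

/-- Nonequal vertices have nonzero determinant. -/
lemma farey_ne_det (A B : FareyPair)
    (h : (Quotient.mk fareySetoid A : FareyVertex) ≠ Quotient.mk fareySetoid B) :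
    A.1.1 * B.1.2 - A.1.2 * B.1.1 ≠ 0 := by
  intro h0
  rcases farey_parallel A.1.1 A.1.2 B.1.1 B.1.2 A.2 B.2 h0 with ⟨e1, e2⟩ | ⟨e1, e2⟩
  · exact h (Quotient.sound (Or.inl (Prod.ext e1.symm e2.symm)))
  · refine h (Quotient.sound (Or.inr ?_))
    apply Prod.ext <;> simp [Prod.fst_neg, Prod.snd_neg] <;> omega

/-- Zero determinant gives equal vertices. -/
lemma farey_det_eq (A B : FareyPair)
    (h0 : A.1.1 * B.1.2 - A.1.2 * B.1.1 = 0) :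
    (Quotient.mk fareySetoid A : FareyVertex) = Quotient.mk fareySetoid B := by
  rcases farey_parallel A.1.1 A.1.2 B.1.1 B.1.2 A.2 B.2 h0 with ⟨e1, e2⟩ | ⟨e1, e2⟩
  · exact Quotient.sound (Or.inl (Prod.ext e1.symm e2.symm))
  · refine Quotient.sound (Or.inr ?_)
    apply Prod.ext <;> simp [Prod.fst_neg, Prod.snd_neg] <;> omega

/-- If `u` and `v` are distinct non-adjacent vertices of the Farey
graph and `c₁ ≠ c₂` are both adjacent to `u` and to `v`, then `c₁` and `c₂` are
adjacent to each other; moreover `c₁` and `c₂` are the only common neighbors of `u`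
and `v`, so there is exactly one quadrilateral triple with outer points `u, v` other
than `(u, c₁, v)`, namely `(u, c₂, v)`, and the two central points are adjacent. -/
theorem farey_quadrilateral_triple_central_points (u v c₁ c₂ : FareyVertex)
    (hne : u ≠ v) (huv : ¬ FareyGraph.Adj u v) (hc : c₁ ≠ c₂)
    (h₁u : FareyGraph.Adj u c₁) (h₁v : FareyGraph.Adj v c₁)
    (h₂u : FareyGraph.Adj u c₂) (h₂v : FareyGraph.Adj v c₂) :
    FareyGraph.Adj c₁ c₂ ∧
      ∀ c : FareyVertex, FareyGraph.Adj u c → FareyGraph.Adj v c → c = c₁ ∨ c = c₂ := by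
  obtain ⟨A, rfl⟩ := Quotient.exists_rep u
  obtain ⟨B, rfl⟩ := Quotient.exists_rep v
  obtain ⟨C1, rfl⟩ := Quotient.exists_rep c₁
  obtain ⟨C2, rfl⟩ := Quotient.exists_rep c₂
  have g1 : |A.1.1 * C1.1.2 - A.1.2 * C1.1.1| = 1 := h₁u
  have g2 : |B.1.1 * C1.1.2 - B.1.2 * C1.1.1| = 1 := h₁v
  have g3 : |A.1.1 * C2.1.2 - A.1.2 * C2.1.1| = 1 := h₂u
  have g4 : |B.1.1 * C2.1.2 - B.1.2 * C2.1.1| = 1 := h₂v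
  have gE1 : |A.1.1 * B.1.2 - A.1.2 * B.1.1| ≠ 1 := huv
  have gE0 : A.1.1 * B.1.2 - A.1.2 * B.1.1 ≠ 0 := farey_ne_det A B hne
  have gK0 : C1.1.1 * C2.1.2 - C1.1.2 * C2.1.1 ≠ 0 := farey_ne_det C1 C2 hc
  constructor
  · exact (farey_key A.1.1 A.1.2 B.1.1 B.1.2 C1.1.1 C1.1.2 C2.1.1 C2.1.2 C2.1.1 C2.1.2
      g1 g2 g3 g4 g3 g4 gE1 gE0 gK0).1
  · intro c hcu hcv
    obtain ⟨C, rfl⟩ := Quotient.exists_rep c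
    have g5 : |A.1.1 * C.1.2 - A.1.2 * C.1.1| = 1 := hcu
    have g6 : |B.1.1 * C.1.2 - B.1.2 * C.1.1| = 1 := hcv
    rcases (farey_key A.1.1 A.1.2 B.1.1 B.1.2 C1.1.1 C1.1.2 C2.1.1 C2.1.2 C.1.1 C.1.2
      g1 g2 g3 g4 g5 g6 gE1 gE0 gK0).2 with h0 | h0
    · exact Or.inl ((farey_det_eq C1 C h0).symm)
    · exact Or.inr ((farey_det_eq C2 C h0).symm)
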